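/- For every integer n ≥ 2, the number of palindromic Conway sequences of n (those lists equal to their own reverse) is exactly 2^(⌊n/2⌋−1). -/

import Mathlib

/-- A Conway sequence of `n`: a nonempty list of positive integers summing to `n`
whose first and last entries are both at least 2. -/
def IsConwaySeq (n : ℕ) (l : List ℕ) : Prop :=
  l ≠ [] ∧ (∀ x ∈ l, 0 < x) ∧ l.sum = n ∧ 2 ≤ l.headI ∧ 2 ≤ l.getLastI


namespace ConwayAux

def incLast : List ℕ → List ℕ
  | [] => []
  | [a] => [a+1]
  | a :: b :: t => a :: incLast (b :: t)

def inc : List ℕ → List ℕ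
  | [] => [2]
  | [a] => [a+2]
  | a :: b :: t => (a+1) :: incLast (b :: t)

lemma incLast_append (s : List ℕ) (d : ℕ) : incLast (s ++ [d]) = s ++ [d+1] := by
  induction s with
  | nil => rfl
  | cons a s ih =>
    cases s with
    | nil => rfl
    | cons b s => simpa [incLast] using ih

lemma inc_cons_append (a : ℕ) (s : List ℕ) (d : ℕ) :
    inc (a :: (s ++ [d])) = (a+1) :: (s ++ [d+1]) := by
  cases s with
  | nil => rfl
  | cons b s =>
    have := incLast_append (b :: s) d
    simp only [List.cons_append] at this ⊢
    simp [inc, this]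

lemma tri (l : List ℕ) : l = [] ∨ (∃ a, l = [a]) ∨ ∃ a s d, l = a :: (s ++ [d]) := by
  cases l with
  | nil => exact Or.inl rfl
  | cons a t =>
    rcases t.eq_nil_or_concat with rfl | ⟨s, d, rfl⟩
    · exact Or.inr (Or.inl ⟨a, rfl⟩)
    · exact Or.inr (Or.inr ⟨a, s, d, by simp⟩)

lemma pal_cases {l : List ℕ} (h : l.reverse = l) :
    l = [] ∨ (∃ a, l = [a]) ∨ ∃ a t, t.reverse = t ∧ l = a :: (t ++ [a]) := by
  rcases tri l with rfl | ⟨a, rfl⟩ | ⟨a, s, d, rfl⟩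
  · exact Or.inl rfl
  · exact Or.inr (Or.inl ⟨a, rfl⟩)
  · simp at h
    obtain ⟨h1, h2⟩ := h
    subst h1
    have hs : s.reverse = s := by
      exact h2.1
    exact Or.inr (Or.inr ⟨d, s, hs, by simp⟩)

end ConwayAux

namespace ConwayAux

lemma inc_nil : inc [] = [2] := rfl
lemma inc_single (a : ℕ) : inc [a] = [a+2] := rfl

lemma inc_sum (l : List ℕ) : (inc l).sum = l.sum + 2 := by
  rcases tri l with rfl | ⟨a, rfl⟩ | ⟨a, s, d, rfl⟩
  · rfl
  · rw [inc_single]; simp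
  · rw [inc_cons_append]; simp; omega

lemma inc_ne_nil (l : List ℕ) : inc l ≠ [] := by
  rcases tri l with rfl | ⟨a, rfl⟩ | ⟨a, s, d, rfl⟩
  · rw [inc_nil]; simp
  · rw [inc_single]; simp
  · rw [inc_cons_append]; simp

lemma inc_pos {l : List ℕ} (h : ∀ x ∈ l, 0 < x) : ∀ x ∈ inc l, 0 < x := by
  rcases tri l with rfl | ⟨a, rfl⟩ | ⟨a, s, d, rfl⟩
  · rw [inc_nil]; simp
  · rw [inc_single]; simp
  · rw [inc_cons_append]
    intro x hx
    simp at hx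
    rcases hx with rfl | hx | rfl
    · omega
    · exact h x (by simp [hx])
    · omega

lemma inc_pal {l : List ℕ} (h : l.reverse = l) : (inc l).reverse = inc l := by
  rcases pal_cases h with rfl | ⟨a, rfl⟩ | ⟨a, t, ht, rfl⟩
  · rfl
  · rfl
  · rw [inc_cons_append]
    simp [ht]

lemma inc_headI {l : List ℕ} (h : ∀ x ∈ l, 0 < x) : 2 ≤ (inc l).headI := by
  rcases tri l with rfl | ⟨a, rfl⟩ | ⟨a, s, d, rfl⟩
  · rw [inc_nil]; simp
  · rw [inc_single]; simp
  · rw [inc_cons_append]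
    have : 0 < a := h a (by simp)
    simp; omega

lemma inc_length (l : List ℕ) : (inc l).length = max 1 l.length := by
  rcases tri l with rfl | ⟨a, rfl⟩ | ⟨a, s, d, rfl⟩
  · rfl
  · rfl
  · rw [inc_cons_append]; simp

lemma inc_inj {l l' : List ℕ} (h : ∀ x ∈ l, 0 < x) (h' : ∀ x ∈ l', 0 < x)
    (e : inc l = inc l') : l = l' := by
  have hlen : max 1 l.length = max 1 l'.length := by
    rw [← inc_length, ← inc_length, e]
  rcases tri l with rfl | ⟨a, rfl⟩ | ⟨a, s, d, rfl⟩ <;>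
    rcases tri l' with rfl | ⟨a', rfl⟩ | ⟨a', s', d', rfl⟩
  · rfl
  · rw [inc_nil, inc_single] at e
    have := h' a' (by simp)
    simp at e; omega
  · rw [inc_nil, inc_cons_append] at e
    simp at hlen
  · rw [inc_nil, inc_single] at e
    have := h a (by simp)
    simp at e; omega
  · rw [inc_single, inc_single] at e
    simp at e; rw [e]
  · rw [inc_single, inc_cons_append] at e
    simp at hlen
  · rw [inc_nil, inc_cons_append] at e
    simp at hlen
  · rw [inc_single, inc_cons_append] at e
    simp at hlen
  · rw [inc_cons_append, inc_cons_append] at e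
    simp only [List.cons.injEq] at e
    obtain ⟨e1, e2⟩ := e
    have hsd : s = s' ∧ d + 1 = d' + 1 := by
      constructor
      · have := congrArg List.dropLast e2
        simpa using this
      · have := congrArg List.getLast? e2
        simpa using this
    obtain ⟨rfl, hd⟩ := hsd
    have : a = a' := by omega
    have : d = d' := by omega
    simp_all

lemma pal_getLastI {l : List ℕ} (h : l.reverse = l) : l.getLastI = l.headI := by
  rcases pal_cases h with rfl | ⟨a, rfl⟩ | ⟨a, t, ht, rfl⟩
  · rfl
  · rfl
  · rw [List.getLastI_eq_getLast?,
      show a :: (t ++ [a]) = (a :: t) ++ a :: [] from by simp,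
      List.getLast?_append_cons]
    rfl

end ConwayAux

namespace ConwayAux

def decP : List Bool → ℕ → List ℕ
  | [], m => if m = 0 then [] else [m]
  | b :: bs, m => if b then 1 :: (decP bs (m-2) ++ [1]) else inc (decP bs (m-2))

lemma decP_true (bs : List Bool) (m : ℕ) :
    decP (true :: bs) m = 1 :: (decP bs (m-2) ++ [1]) := rfl

lemma decP_false (bs : List Bool) (m : ℕ) :
    decP (false :: bs) m = inc (decP bs (m-2)) := rfl

lemma decP_spec : ∀ (bs : List Bool) (m : ℕ), bs.length = m / 2 →
    (∀ x ∈ decP bs m, 0 < x) ∧ (decP bs m).sum = m ∧ (decP bs m).reverse = decP bs m := by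
  intro bs
  induction bs with
  | nil =>
    intro m h
    simp at h
    have hm : m = 0 ∨ m = 1 := by omega
    rcases hm with rfl | rfl
    · simp [decP]
    · simp [decP]
  | cons b t ih =>
    intro m h
    have hm : 2 ≤ m := by simp at h; omega
    have hlt : t.length = (m-2)/2 := by simp at h; omega
    obtain ⟨hpos, hsum, hpal⟩ := ih (m-2) hlt
    cases b with
    | true =>
      rw [decP_true]
      refine ⟨?_, ?_, ?_⟩
      · intro x hx
        simp at hx
        rcases hx with rfl | hx | rfl
        · omega
        · exact hpos x hx
        · omega
      · simp; omega
      · simp [hpal]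
    | false =>
      rw [decP_false]
      refine ⟨inc_pos hpos, ?_, inc_pal hpal⟩
      rw [inc_sum, hsum]; omega

lemma decP_inj : ∀ (bs bs' : List Bool) (m : ℕ), bs.length = m / 2 → bs'.length = m / 2 →
    decP bs m = decP bs' m → bs = bs' := by
  intro bs
  induction bs with
  | nil =>
    intro bs' m h h' e
    cases bs' with
    | nil => rfl
    | cons b' t' => simp at h h'; omega
  | cons b t ih =>
    intro bs' m h h' e
    cases bs' with
    | nil => simp at h h'; omega
    | cons b' t' =>
      have hm : 2 ≤ m := by simp at h; omega
      have hlt : t.length = (m-2)/2 := by simp at h; omega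
      have hlt' : t'.length = (m-2)/2 := by simp at h'; omega
      obtain ⟨hpos, hsum, hpal⟩ := decP_spec t (m-2) hlt
      obtain ⟨hpos', hsum', hpal'⟩ := decP_spec t' (m-2) hlt'
      cases b <;> cases b' <;>
        simp only [decP_true, decP_false] at e
      · have := ih t' (m-2) hlt hlt' (inc_inj hpos hpos' e)
        rw [this]
      · exfalso
        have h1 : 2 ≤ (inc (decP t (m-2))).headI := inc_headI hpos
        rw [e] at h1
        simp at h1
      · exfalso
        have h1 : 2 ≤ (inc (decP t' (m-2))).headI := inc_headI hpos'
        rw [← e] at h1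
        simp at h1
      · simp only [List.cons.injEq, true_and] at e
        have e2 : decP t (m-2) = decP t' (m-2) := by
          have := congrArg List.dropLast e
          simpa using this
        have := ih t' (m-2) hlt hlt' e2
        rw [this]

lemma exists_inc_preimage {l : List ℕ} (hpal : l.reverse = l) (hpos : ∀ x ∈ l, 0 < x)
    (hhead : 2 ≤ l.headI) :
    ∃ l₀, (∀ x ∈ l₀, 0 < x) ∧ l₀.reverse = l₀ ∧ l₀.sum + 2 = l.sum ∧ inc l₀ = l := by
  rcases pal_cases hpal with rfl | ⟨a, rfl⟩ | ⟨a, t, ht, rfl⟩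
  · simp at hhead
  · simp at hhead
    by_cases h2 : a = 2
    · subst h2
      exact ⟨[], by simp, rfl, by simp, rfl⟩
    · refine ⟨[a-2], by simp; omega, rfl, by simp; omega, ?_⟩
      rw [inc_single]
      congr 1
      omega
  · have ha : 2 ≤ a := by simpa using hhead
    refine ⟨(a-1) :: (t ++ [a-1]), ?_, ?_, ?_, ?_⟩
    · intro x hx
      simp at hx
      rcases hx with rfl | hx | rfl
      · omega
      · exact hpos x (by simp [hx])
      · omega
    · simp [ht]
    · simp; omega
    · rw [inc_cons_append]
      congr 1
      · omega
      · congr 1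
        congr 1
        omega

lemma decP_surj : ∀ (m : ℕ) (l : List ℕ), (∀ x ∈ l, 0 < x) → l.sum = m → l.reverse = l →
    ∃ bs : List Bool, bs.length = m / 2 ∧ decP bs m = l := by
  intro m
  induction m using Nat.strong_induction_on with
  | _ m ih =>
    intro l hpos hsum hpal
    by_cases hm : m < 2
    · interval_cases m
      · have : l = [] := by
          cases l with
          | nil => rfl
          | cons a t =>
            exfalso
            have := hpos a (by simp)
            simp at hsum
            omega
        subst this
        exact ⟨[], rfl, rfl⟩
      · have : l = [1] := by
          cases l with
          | nil => simp at hsum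
          | cons a t =>
            have ha := hpos a (by simp)
            simp at hsum
            have ht : t.sum = 0 := by omega
            have : t = [] := by
              cases t with
              | nil => rfl
              | cons x s =>
                exfalso
                have := hpos x (by simp)
                simp at ht
                omega
            subst this
            simp at hsum ⊢
            omega
        subst this
        exact ⟨[], rfl, rfl⟩
    · push_neg at hm
      by_cases hh : 2 ≤ l.headI
      · obtain ⟨l₀, hpos₀, hpal₀, hsum₀, hinc₀⟩ := exists_inc_preimage hpal hpos hh
        obtain ⟨bs, hbs, hdec⟩ := ih (m-2) (by omega) l₀ hpos₀ (by omega) hpal₀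
        refine ⟨false :: bs, by simp [hbs]; omega, ?_⟩
        rw [decP_false, hdec, hinc₀]
      · rcases pal_cases hpal with rfl | ⟨a, rfl⟩ | ⟨a, t, ht, rfl⟩
        · simp at hsum; omega
        · simp at hsum hh
          have := hpos a (by simp)
          omega
        · have ha1 : a = 1 := by
            have := hpos a (by simp)
            simp at hh
            omega
          subst ha1
          have hts : t.sum = m - 2 := by simp at hsum; omega
          obtain ⟨bs, hbs, hdec⟩ := ih (m-2) (by omega) t
            (fun x hx => hpos x (by simp [hx])) hts ht
          refine ⟨true :: bs, by simp [hbs]; omega, ?_⟩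
          rw [decP_true, hdec]

end ConwayAux

open ConwayAux in
/-- For every `n ≥ 2`, the number of palindromic Conway sequences of `n`
is `2^(⌊n/2⌋-1)`. -/
theorem palindromic_conway_seq_count (n : ℕ) (hn : 2 ≤ n) :
    Nat.card {l : List ℕ // IsConwaySeq n l ∧ l.reverse = l} = 2 ^ (n / 2 - 1) := by
  have hdiv : (n - 2) / 2 = n / 2 - 1 := by omega
  let F : {bs : List Bool // bs.length = n / 2 - 1} →
      {l : List ℕ // IsConwaySeq n l ∧ l.reverse = l} := fun bs => by
    refine ⟨inc (decP bs.1 (n-2)), ?_⟩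
    obtain ⟨hpos, hsum, hpal⟩ := decP_spec bs.1 (n-2) (by omega)
    have hpal' := inc_pal hpal
    refine ⟨⟨inc_ne_nil _, inc_pos hpos, ?_, inc_headI hpos, ?_⟩, hpal'⟩
    · rw [inc_sum, hsum]; omega
    · rw [pal_getLastI hpal']
      exact inc_headI hpos
  have hbij : Function.Bijective F := by
    constructor
    · rintro ⟨bs, hbs⟩ ⟨bs', hbs'⟩ e
      have e' : inc (decP bs (n-2)) = inc (decP bs' (n-2)) := congrArg Subtype.val e
      obtain ⟨hpos, -, -⟩ := decP_spec bs (n-2) (by omega)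
      obtain ⟨hpos', -, -⟩ := decP_spec bs' (n-2) (by omega)
      have := decP_inj bs bs' (n-2) (by omega) (by omega) (inc_inj hpos hpos' e')
      exact Subtype.ext this
    · rintro ⟨l, ⟨hne, hpos, hsum, hhead, hlast⟩, hpal⟩
      obtain ⟨l₀, hpos₀, hpal₀, hsum₀, hinc₀⟩ := exists_inc_preimage hpal hpos hhead
      obtain ⟨bs, hbs, hdec⟩ := decP_surj (n-2) l₀ hpos₀ (by omega) hpal₀
      refine ⟨⟨bs, by omega⟩, ?_⟩
      apply Subtype.ext
      show inc (decP bs (n-2)) = l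
      rw [hdec, hinc₀]
  rw [← Nat.card_congr (Equiv.ofBijective F hbij)]
  have : Nat.card (List.Vector Bool (n / 2 - 1)) = 2 ^ (n / 2 - 1) := by
    rw [Nat.card_eq_fintype_card, card_vector, Fintype.card_bool]
  exact this
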